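/- Let Q₈ be the quaternion group of order 8 and H = ⟨i⟩ its cyclic subgroup of order 4. Then H is not a perfect code in any Cayley graph of Q₈; equivalently, there is no inverse-closed subset S of Q₈ \ {1} such that H is a (0,1)-regular set in Cay(Q₈,S). -/

import Mathlib

/-- The Cayley graph of a group `G` with connection set `S`:
`x` is adjacent to `y` iff `y * x⁻¹ ∈ S` (symmetrized; for inverse-closed `S`
not containing `1` this is the usual Cayley graph). -/
def cayley {G : Type*} [Group G] (S : Set G) : SimpleGraph G :=
  SimpleGraph.fromRel (fun x y => y * x⁻¹ ∈ S)

/-- `C` is an `(a,b)`-regular set in `Γ`: every vertex in `C` has exactly `a`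
neighbors in `C`, and every vertex outside `C` has exactly `b` neighbors in `C`. -/
def IsRegularSet {V : Type*} (Γ : SimpleGraph V) (C : Set V) (a b : ℕ) : Prop :=
  (∀ v ∈ C, (Γ.neighborSet v ∩ C).ncard = a) ∧
  (∀ v ∉ C, (Γ.neighborSet v ∩ C).ncard = b)

open QuaternionGroup

lemma inv_xa' (i : ZMod 4) : (QuaternionGroup.xa i : QuaternionGroup 2)⁻¹ = xa (2 + i) := rfl

lemma inv_a' (i : ZMod 4) : (QuaternionGroup.a i : QuaternionGroup 2)⁻¹ = a (-i) := rfl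

lemma a_zpow (k : ℤ) : (QuaternionGroup.a 1 : QuaternionGroup 2) ^ k = a (k : ZMod 4) := by
  cases k with
  | ofNat n => simp [a_one_pow]
  | negSucc n =>
      rw [zpow_negSucc, a_one_pow, inv_a']
      congr 1


lemma xa_not_mem (j : ZMod 4) :
    QuaternionGroup.xa j ∉ Subgroup.zpowers (QuaternionGroup.a 1 : QuaternionGroup 2) := by
  rw [Subgroup.mem_zpowers_iff]
  rintro ⟨k, hk⟩
  rw [a_zpow] at hk
  exact absurd hk (by simp)

open QuaternionGroup in
theorem stmt16 :
    ¬ ∃ S : Set (QuaternionGroup 2), S⁻¹ = S ∧ (1 : QuaternionGroup 2) ∉ S ∧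
      IsRegularSet (cayley S)
        (Subgroup.zpowers (a 1 : QuaternionGroup 2) : Set (QuaternionGroup 2)) 0 1 := by
  rintro ⟨S, hSinv, hS1, _, h1⟩
  -- Step 1: some xa j0 ∈ S
  obtain ⟨w, hw⟩ := Set.ncard_eq_one.mp (h1 (xa 0) (xa_not_mem 0))
  have hwmem : w ∈ (cayley S).neighborSet (xa 0) ∩
      (Subgroup.zpowers (a 1 : QuaternionGroup 2) : Set (QuaternionGroup 2)) := by
    rw [hw]; exact rfl
  obtain ⟨hadj, hwH⟩ := hwmem
  have hj0 : ∃ j0 : ZMod 4, QuaternionGroup.xa j0 ∈ S := by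
    cases w with
    | xa k => exact absurd hwH (xa_not_mem k)
    | a k =>
        rw [SimpleGraph.mem_neighborSet, cayley, SimpleGraph.fromRel_adj] at hadj
        rcases hadj.2 with h | h
        · rw [inv_xa', a_mul_xa] at h
          exact ⟨_, h⟩
        · rw [inv_a', xa_mul_a] at h
          exact ⟨_, h⟩
  obtain ⟨j0, hj0⟩ := hj0
  -- Step 2: xa (2 + j0) ∈ S
  have hj0' : QuaternionGroup.xa (2 + j0) ∈ S := by
    rw [← hSinv, Set.mem_inv, inv_xa']
    have : (2 : ZMod 4) + (2 + j0) = j0 := by ring_nf; rw [show ((4:ZMod 4)) = 0 from rfl]; ring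
    rw [this]; exact hj0
  -- Step 3: a 0 and a 2 are both neighbors of xa j0 in H
  obtain ⟨w', hw'⟩ := Set.ncard_eq_one.mp (h1 (xa j0) (xa_not_mem j0))
  have hne : QuaternionGroup.xa j0 ≠ (QuaternionGroup.a 0 : QuaternionGroup 2) := by intro h; cases h
  have hne2 : QuaternionGroup.xa j0 ≠ (QuaternionGroup.a 2 : QuaternionGroup 2) := by simp
  have h0mem : (QuaternionGroup.a 0 : QuaternionGroup 2) ∈
      (cayley S).neighborSet (xa j0) ∩
      (Subgroup.zpowers (a 1 : QuaternionGroup 2) : Set (QuaternionGroup 2)) := by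
    constructor
    · rw [SimpleGraph.mem_neighborSet, cayley, SimpleGraph.fromRel_adj]
      refine ⟨hne, Or.inl ?_⟩
      rw [inv_xa', a_mul_xa]
      simpa using hj0'
    · exact Subgroup.mem_zpowers_iff.mpr ⟨0, by rw [a_zpow]; norm_num⟩
  have h2mem : (QuaternionGroup.a 2 : QuaternionGroup 2) ∈
      (cayley S).neighborSet (xa j0) ∩
      (Subgroup.zpowers (a 1 : QuaternionGroup 2) : Set (QuaternionGroup 2)) := by
    constructor
    · rw [SimpleGraph.mem_neighborSet, cayley, SimpleGraph.fromRel_adj]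
      refine ⟨hne2, Or.inl ?_⟩
      rw [inv_xa', a_mul_xa]
      simpa using hj0
    · exact Subgroup.mem_zpowers_iff.mpr ⟨2, by rw [a_zpow]; norm_num⟩
  rw [hw'] at h0mem h2mem
  have : (QuaternionGroup.a 0 : QuaternionGroup 2) = QuaternionGroup.a 2 := by
    rw [Set.mem_singleton_iff] at h0mem h2mem
    rw [h0mem, h2mem]
  exact absurd this (by decide)
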